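/- Let a ∈ ℝ and δ > 0, and let f : ℝ → ℂ be differentiable at every point of [a-δ, a+δ] with derivative f' interval-integrable on [a-δ, a+δ]. Then f(a) = (1/(2δ)) lim_{M→∞} ∑_{n=-M}^{M} e^{iπna/δ} ∫_{a-δ}^{a+δ} f(u) e^{-iπnu/δ} du. (No condition relating f(a-δ) and f(a+δ) is required.) -/

import Mathlib

open MeasureTheory intervalIntegral Real Complex Filter

section helpers

lemma RL (F : ℝ → ℂ) (b : ℕ → ℝ) (hb : Tendsto b atTop (cocompact ℝ)) :
    Tendsto (fun M => ∫ v : ℝ, F v * Complex.exp (-(b M * v) * Complex.I)) atTop (nhds 0) := by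
  have h2π : (2 * Real.pi) ≠ 0 := by positivity
  have hhom : Tendsto (fun x : ℝ => x * (2 * Real.pi)⁻¹) (cocompact ℝ) (cocompact ℝ) :=
    ((Homeomorph.mulRight₀ _ (inv_ne_zero h2π)).map_cocompact).le
  have h := (Real.tendsto_integral_exp_smul_cocompact F).comp (hhom.comp hb)
  convert h using 2 with M
  congr 1
  funext v
  simp only [Function.comp, Circle.smul_def, Real.fourierChar_apply]
  rw [mul_comm]
  congr 2
  have hπ : (Real.pi : ℂ) ≠ 0 := by exact_mod_cast Real.pi_ne_zero
  push_cast
  field_simp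

lemma icc_succ (M : ℕ) : Finset.Icc (-(M+1:ℤ)) (M+1) =
    insert (-(M+1:ℤ)) (insert ((M:ℤ)+1) (Finset.Icc (-(M:ℤ)) M)) := by
  ext x; simp; omega

lemma dirichlet (θ : ℂ) (M : ℕ) :
    (∑ n ∈ Finset.Icc (-(M:ℤ)) (M:ℤ), Complex.exp (Complex.I * n * θ)) * Complex.sin (θ/2)
      = Complex.sin (((M:ℂ) + 1/2) * θ) := by
  induction M with
  | zero => simp; ring_nf
  | succ M ih =>
    rw [show (-((M+1:ℕ):ℤ)) = -((M:ℤ)+1) by push_cast; ring,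
        show (((M+1:ℕ)):ℤ) = ((M:ℤ)+1) by push_cast; ring]
    rw [icc_succ, Finset.sum_insert (by simp; omega), Finset.sum_insert (by simp)]
    have key : (Complex.exp (Complex.I * (-((M:ℂ)+1)) * θ) + Complex.exp (Complex.I * ((M:ℂ)+1) * θ)) * Complex.sin (θ/2)
        = Complex.sin (((M:ℂ)+1+1/2)*θ) - Complex.sin (((M:ℂ)+1/2)*θ) := by
      rw [Complex.sin_sub_sin]
      have e1 : ((((M:ℂ)+1+1/2)*θ - ((M:ℂ)+1/2)*θ)/2) = θ/2 := by ring
      have e2 : ((((M:ℂ)+1+1/2)*θ + ((M:ℂ)+1/2)*θ)/2) = ((M:ℂ)+1)*θ := by ring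
      rw [e1, e2]
      have h2c := Complex.two_cos (((M:ℂ)+1)*θ)
      have harg1 : Complex.I * (-((M:ℂ)+1)) * θ = -(((M:ℂ)+1)*θ) * Complex.I := by ring
      have harg2 : Complex.I * (((M:ℂ)+1)) * θ = (((M:ℂ)+1)*θ) * Complex.I := by ring
      rw [harg1, harg2]
      linear_combination -Complex.sin (θ/2) * h2c
    push_cast
    linear_combination key + ih

lemma jordan {x : ℝ} (hx : |x| ≤ π/2) : 2/π * |x| ≤ |Real.sin x| := by
  rcases le_or_gt 0 x with h | h
  · rw [_root_.abs_of_nonneg h] at hx ⊢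
    rw [_root_.abs_of_nonneg (Real.sin_nonneg_of_nonneg_of_le_pi h (by linarith [Real.pi_pos]))]
    exact Real.mul_le_sin h hx
  · rw [_root_.abs_of_neg h] at hx ⊢
    have h0 : Real.sin (-x) = -Real.sin x := Real.sin_neg x
    have h2 : |Real.sin x| = Real.sin (-x) := by
      rw [h0, _root_.abs_of_nonpos]
      exact neg_nonneg.mp (by rw [← h0]; exact Real.sin_nonneg_of_nonneg_of_le_pi (by linarith) (by linarith [Real.pi_pos]))
    rw [h2]
    exact Real.mul_le_sin (by linarith) hx

lemma gbound (a δ : ℝ) (hδ : 0 < δ) (f f' : ℝ → ℂ)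
    (hdiff : ∀ x ∈ Set.Icc (a - δ) (a + δ), HasDerivAt f (f' x) x) :
    ∃ C, ∀ u ∈ Set.Icc (a-δ) (a+δ),
      ‖(f u - f a) / ((Real.sin (π*(a-u)/(2*δ)) : ℝ) : ℂ)‖ ≤ C := by
  have ha : a ∈ Set.Icc (a-δ) (a+δ) := ⟨by linarith, by linarith⟩
  set q : ℝ → ℂ := fun u => if u = a then f' a else (f u - f a) / ((u - a : ℝ) : ℂ) with hq
  have hqc : ContinuousOn q (Set.Icc (a-δ) (a+δ)) := by
    intro u hu
    rcases eq_or_ne u a with rfl | hne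
    · have hupdate : q = Function.update (fun v => (f v - f u) / ((v - u : ℝ) : ℂ)) u (f' u) := by
        funext v
        rw [Function.update_apply]
      have hslope : Filter.Tendsto (fun v => (f v - f u) / ((v - u : ℝ) : ℂ)) (nhdsWithin u {u}ᶜ) (nhds (f' u)) := by
        have := (hasDerivAt_iff_tendsto_slope).mp (hdiff u hu)
        refine this.congr (fun v => ?_)
        simp only [slope, vsub_eq_sub, Complex.real_smul, Complex.ofReal_inv]
        rw [div_eq_inv_mul]
      rw [hupdate]
      exact (continuousAt_update_same.mpr hslope).continuousWithinAt
    · have hfc : ContinuousAt f u := (hdiff u hu).continuousAt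
      have : ContinuousAt q u := by
        have hcongr : ∀ᶠ v in nhds u, (fun v => (f v - f a) / ((v - a : ℝ) : ℂ)) v = q v := by
          filter_upwards [isOpen_ne.mem_nhds hne] with v hv
          simp [hq, hv]
        refine ContinuousAt.congr ?_ hcongr
        refine ContinuousAt.div (hfc.sub continuousAt_const) ?_ ?_
        · exact (Complex.continuous_ofReal.comp (continuous_id.sub continuous_const)).continuousAt
        · exact_mod_cast sub_ne_zero.mpr hne
      exact this.continuousWithinAt
  obtain ⟨C₀, hC₀⟩ := (isCompact_Icc).exists_bound_of_continuousOn hqc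
  have hqa := (norm_nonneg (q a)).trans (hC₀ a ha)
  refine ⟨δ * C₀, fun u hu => ?_⟩
  rcases eq_or_ne u a with rfl | hne
  · simp only [sub_self, zero_div, norm_zero]
    nlinarith [hqa]
  · have husub : |a - u| ≤ δ := by
      rw [abs_le]; constructor <;> [skip; skip] <;> cases' hu with h1 h2 <;> linarith
    have hargle : |π*(a-u)/(2*δ)| ≤ π/2 := by
      rw [abs_div, abs_mul, _root_.abs_of_pos Real.pi_pos, _root_.abs_of_pos (by linarith : (0:ℝ) < 2*δ)]
      rw [div_le_div_iff₀ (by linarith) (by norm_num)]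
      nlinarith [Real.pi_pos]
    have hsin : |a - u|/δ ≤ |Real.sin (π*(a-u)/(2*δ))| := by
      have hj := jordan hargle
      have heq : 2/π * |π*(a-u)/(2*δ)| = |a-u|/δ := by
        rw [abs_div, abs_mul, _root_.abs_of_pos Real.pi_pos, _root_.abs_of_pos (by linarith : (0:ℝ) < 2*δ)]
        field_simp [Real.pi_ne_zero.symm]
      linarith [heq ▸ hj]
    have hbpos : 0 < |a - u|/δ := by
      apply div_pos _ hδ
      rw [abs_pos]; exact sub_ne_zero.mpr (Ne.symm hne)
    have hqu : ‖q u‖ = ‖f u - f a‖ / |u - a| := by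
      rw [hq]
      simp only [if_neg hne]
      rw [norm_div, Complex.norm_real, Real.norm_eq_abs]
    have key : ‖(f u - f a) / ((Real.sin (π*(a-u)/(2*δ)) : ℝ) : ℂ)‖
        = ‖f u - f a‖ / |Real.sin (π*(a-u)/(2*δ))| := by
      rw [norm_div, Complex.norm_real, Real.norm_eq_abs]
    rw [key]
    have h5 : ‖f u - f a‖ / |Real.sin (π*(a-u)/(2*δ))| ≤ ‖f u - f a‖ / (|a-u|/δ) :=
      div_le_div_of_nonneg_left (norm_nonneg _) hbpos hsin
    have h6 : ‖f u - f a‖ / (|a-u|/δ) = δ * (‖f u - f a‖ / |u - a|) := by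
      rw [abs_sub_comm]
      field_simp
    have h7 : ‖f u - f a‖ / |u - a| ≤ C₀ := hqu ▸ hC₀ u hu
    calc ‖f u - f a‖ / |Real.sin (π*(a-u)/(2*δ))| ≤ δ * (‖f u - f a‖ / |u - a|) := by rw [← h6]; exact h5
      _ ≤ δ * C₀ := by nlinarith

lemma kernel_int (a δ : ℝ) (hδ : 0 < δ) (n : ℤ) :
    (∫ u in (a-δ)..(a+δ), Complex.exp (Complex.I * n * ((π*(a-u)/δ : ℝ) : ℂ)))
      = if n = 0 then (2*δ : ℂ) else 0 := by
  have hδ' : (δ:ℂ) ≠ 0 := by exact_mod_cast hδ.ne'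
  rcases eq_or_ne n 0 with rfl | hn
  · simp; ring
  · rw [if_neg hn]
    set c : ℂ := -(Complex.I * n * π) / δ with hc
    have hcne : c ≠ 0 := by
      simp only [hc, div_ne_zero_iff, neg_ne_zero, mul_ne_zero_iff]
      refine ⟨⟨⟨Complex.I_ne_zero, ?_⟩, ?_⟩, hδ'⟩
      · exact_mod_cast hn
      · exact_mod_cast Real.pi_ne_zero
    have hfun : ∀ u : ℝ, Complex.exp (Complex.I * n * ((π*(a-u)/δ : ℝ) : ℂ))
        = Complex.exp (Complex.I * n * π * a / δ) * Complex.exp (c * u) := by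
      intro u
      rw [← Complex.exp_add]
      congr 1
      rw [hc]
      push_cast
      field_simp
      ring
    simp_rw [hfun]
    rw [intervalIntegral.integral_const_mul, integral_exp_mul_complex hcne]
    have h1 : c * ((a+δ:ℝ):ℂ) = c*a + -(Complex.I * n * π) := by
      rw [hc]; push_cast; field_simp; ring
    have h2 : c * ((a-δ:ℝ):ℂ) = c*a + (Complex.I * n * π) := by
      rw [hc]; push_cast; field_simp; ring
    have h3 : Complex.exp (-(Complex.I * n * π)) = Complex.exp (Complex.I * n * π) := by
      have h4 := Complex.exp_int_mul_two_pi_mul_I n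
      calc Complex.exp (-(Complex.I * n * π))
          = Complex.exp (Complex.I * n * π) * Complex.exp (-(n * (2 * π * Complex.I))) := by
            rw [← Complex.exp_add]; congr 1; ring
        _ = Complex.exp (Complex.I * n * π) := by
            rw [Complex.exp_neg, h4, inv_one, mul_one]
    rw [h1, h2, Complex.exp_add, Complex.exp_add, h3]
    ring

lemma sincos_decomp (A B : ℂ) (x y : ℂ) :
    x * Complex.sin (A - B) + y * Complex.cos (A - B)
    = (Complex.I/2 * Complex.exp (-A*Complex.I)) * (x * Complex.exp (B*Complex.I))
      - (Complex.I/2 * Complex.exp (A*Complex.I)) * (x * Complex.exp (-B*Complex.I))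
      + ((1:ℂ)/2 * Complex.exp (A*Complex.I)) * (y * Complex.exp (-B*Complex.I))
      + ((1:ℂ)/2 * Complex.exp (-A*Complex.I)) * (y * Complex.exp (B*Complex.I)) := by
  have hs := Complex.two_sin (A - B)
  have hc := Complex.two_cos (A - B)
  have e1 : Complex.exp (-(A-B)*Complex.I) = Complex.exp (-A*Complex.I) * Complex.exp (B*Complex.I) := by
    rw [← Complex.exp_add]; congr 1; ring
  have e2 : Complex.exp ((A-B)*Complex.I) = Complex.exp (A*Complex.I) * Complex.exp (-B*Complex.I) := by
    rw [← Complex.exp_add]; congr 1; ring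
  rw [e1, e2] at hs hc
  linear_combination (x/2) * hs + (y/2) * hc

lemma modInt (h : ℝ → ℂ) (hh : Integrable h) (w : ℝ) :
    Integrable (fun v : ℝ => h v * Complex.exp (-(w * v) * Complex.I)) := by
  have hb : ∀ v : ℝ, ‖Complex.exp (-((w:ℂ) * v) * Complex.I)‖ ≤ 1 := by
    intro v
    rw [show -((w:ℂ)*v)*Complex.I = ((-(w*v):ℝ):ℂ)*Complex.I by push_cast; ring]
    rw [Complex.norm_exp_ofReal_mul_I]
  have := hh.bdd_mul
    ((Complex.continuous_exp.comp (by fun_prop : Continuous (fun v : ℝ => -((w:ℂ) * v) * Complex.I))).aestronglyMeasurable) (MeasureTheory.ae_of_all _ hb)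
  exact this.congr (MeasureTheory.ae_of_all _ (fun v => mul_comm _ _))

lemma core_bound (h₁ h₂ : ℝ → ℂ) (ih₁ : Integrable h₁) (ih₂ : Integrable h₂) (A b : ℝ) :
    ‖∫ v : ℝ, (h₁ v * Complex.sin (((A - b*v : ℝ)):ℂ) + h₂ v * Complex.cos (((A - b*v : ℝ)):ℂ))‖
      ≤ (1/2)*‖∫ v : ℝ, h₁ v * Complex.exp (-(-b * v) * Complex.I)‖
      + (1/2)*‖∫ v : ℝ, h₁ v * Complex.exp (-(b * v) * Complex.I)‖
      + (1/2)*‖∫ v : ℝ, h₂ v * Complex.exp (-(b * v) * Complex.I)‖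
      + (1/2)*‖∫ v : ℝ, h₂ v * Complex.exp (-(-b * v) * Complex.I)‖ := by
  have hpoint : (fun v : ℝ => h₁ v * Complex.sin (((A - b*v : ℝ)):ℂ)
      + h₂ v * Complex.cos (((A - b*v : ℝ)):ℂ))
      = fun v : ℝ =>
          (Complex.I/2 * Complex.exp (-(A:ℂ)*Complex.I)) * (h₁ v * Complex.exp (-(-b * v) * Complex.I))
          - (Complex.I/2 * Complex.exp ((A:ℂ)*Complex.I)) * (h₁ v * Complex.exp (-(b * v) * Complex.I))
          + ((1:ℂ)/2 * Complex.exp ((A:ℂ)*Complex.I)) * (h₂ v * Complex.exp (-(b * v) * Complex.I))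
          + ((1:ℂ)/2 * Complex.exp (-(A:ℂ)*Complex.I)) * (h₂ v * Complex.exp (-(-b * v) * Complex.I)) := by
    funext v
    have hz : (((A - b*v : ℝ)):ℂ) = (A:ℂ) - ((b:ℂ)*(v:ℂ)) := by push_cast; ring
    have hB1 : ((b:ℂ)*(v:ℂ))*Complex.I = -(-(b:ℂ) * v) * Complex.I := by ring
    have hB2 : -((b:ℂ)*(v:ℂ))*Complex.I = -((b:ℂ) * v) * Complex.I := by ring
    rw [hz]
    rw [sincos_decomp ((A:ℂ)) ((b:ℂ)*(v:ℂ)) (h₁ v) (h₂ v), hB1, hB2]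
  rw [hpoint]
  have i1 : Integrable (fun v : ℝ => (Complex.I/2 * Complex.exp (-(A:ℂ)*Complex.I)) * (h₁ v * Complex.exp (-(-b * v) * Complex.I))) volume := by
    refine (Integrable.const_mul ?_ _)
    exact (modInt h₁ ih₁ (-b)).congr (MeasureTheory.ae_of_all _ (fun v => by rw [Complex.ofReal_neg]))
  have i2 : Integrable (fun v : ℝ => (Complex.I/2 * Complex.exp ((A:ℂ)*Complex.I)) * (h₁ v * Complex.exp (-(b * v) * Complex.I))) volume :=
    (modInt h₁ ih₁ b).const_mul _
  have i3 : Integrable (fun v : ℝ => ((1:ℂ)/2 * Complex.exp ((A:ℂ)*Complex.I)) * (h₂ v * Complex.exp (-(b * v) * Complex.I))) volume :=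
    (modInt h₂ ih₂ b).const_mul _
  have i4 : Integrable (fun v : ℝ => ((1:ℂ)/2 * Complex.exp (-(A:ℂ)*Complex.I)) * (h₂ v * Complex.exp (-(-b * v) * Complex.I))) volume := by
    refine (Integrable.const_mul ?_ _)
    exact (modInt h₂ ih₂ (-b)).congr (MeasureTheory.ae_of_all _ (fun v => by rw [Complex.ofReal_neg]))
  have i12 : Integrable (fun v : ℝ => (Complex.I/2 * Complex.exp (-(A:ℂ)*Complex.I)) * (h₁ v * Complex.exp (-(-b * v) * Complex.I))
      - (Complex.I/2 * Complex.exp ((A:ℂ)*Complex.I)) * (h₁ v * Complex.exp (-(b * v) * Complex.I))) volume := i1.sub i2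
  have i123 : Integrable (fun v : ℝ => (Complex.I/2 * Complex.exp (-(A:ℂ)*Complex.I)) * (h₁ v * Complex.exp (-(-b * v) * Complex.I))
      - (Complex.I/2 * Complex.exp ((A:ℂ)*Complex.I)) * (h₁ v * Complex.exp (-(b * v) * Complex.I))
      + ((1:ℂ)/2 * Complex.exp ((A:ℂ)*Complex.I)) * (h₂ v * Complex.exp (-(b * v) * Complex.I))) volume := i12.add i3
  rw [MeasureTheory.integral_add i123 i4,
      MeasureTheory.integral_add i12 i3,
      MeasureTheory.integral_sub i1 i2,
      MeasureTheory.integral_const_mul, MeasureTheory.integral_const_mul,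
      MeasureTheory.integral_const_mul, MeasureTheory.integral_const_mul]
  have hnc : ∀ x : ℝ, ‖Complex.exp ((x:ℂ)*Complex.I)‖ = 1 := fun x => by
    rw [Complex.norm_exp_ofReal_mul_I]
  have hnc' : ‖Complex.exp (-(A:ℂ)*Complex.I)‖ = 1 := by
    rw [show -(A:ℂ) = ((-A:ℝ):ℂ) by push_cast; ring]
    exact hnc (-A)
  have hcn1 : ‖(Complex.I/2 * Complex.exp (-(A:ℂ)*Complex.I))‖ = 1/2 := by
    rw [norm_mul, hnc']; simp
  have hcn2 : ‖(Complex.I/2 * Complex.exp ((A:ℂ)*Complex.I))‖ = 1/2 := by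
    rw [norm_mul, hnc A]; simp
  have hcn3 : ‖((1:ℂ)/2 * Complex.exp ((A:ℂ)*Complex.I))‖ = 1/2 := by
    rw [norm_mul, hnc A]; norm_num
  have hcn4 : ‖((1:ℂ)/2 * Complex.exp (-(A:ℂ)*Complex.I))‖ = 1/2 := by
    rw [norm_mul, hnc']; norm_num
  set T1 := ∫ v : ℝ, h₁ v * Complex.exp (-(-b * v) * Complex.I)
  set T2 := ∫ v : ℝ, h₁ v * Complex.exp (-(b * v) * Complex.I)
  set T3 := ∫ v : ℝ, h₂ v * Complex.exp (-(b * v) * Complex.I)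
  set T4 := ∫ v : ℝ, h₂ v * Complex.exp (-(-b * v) * Complex.I)
  calc ‖_ * T1 - _ * T2 + _ * T3 + _ * T4‖
      ≤ ‖_ * T1 - _ * T2 + _ * T3‖ + ‖_ * T4‖ := norm_add_le _ _
    _ ≤ (‖_ * T1 - _ * T2‖ + ‖_ * T3‖) + ‖_ * T4‖ := by gcongr; exact norm_add_le _ _
    _ ≤ ((‖_ * T1‖ + ‖_ * T2‖) + ‖_ * T3‖) + ‖_ * T4‖ := by gcongr; exact norm_sub_le _ _
    _ = (1/2)*‖T1‖ + (1/2)*‖T2‖ + (1/2)*‖T3‖ + (1/2)*‖T4‖ := by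
        rw [show ‖(Complex.I/2 * Complex.exp (-(A:ℂ)*Complex.I)) * T1‖ = 1/2*‖T1‖ by rw [norm_mul, hcn1],
            show ‖(Complex.I/2 * Complex.exp ((A:ℂ)*Complex.I)) * T2‖ = 1/2*‖T2‖ by rw [norm_mul, hcn2],
            show ‖((1:ℂ)/2 * Complex.exp ((A:ℂ)*Complex.I)) * T3‖ = 1/2*‖T3‖ by rw [norm_mul, hcn3],
            show ‖((1:ℂ)/2 * Complex.exp (-(A:ℂ)*Complex.I)) * T4‖ = 1/2*‖T4‖ by rw [norm_mul, hcn4]]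

/-- Corollary III of the paper (local Fourier series centered at `a`): for `f`
differentiable on `[a-δ, a+δ]` with integrable derivative,
`f(a) = (1/(2δ)) lim_{M→∞} ∑_{n=-M}^{M} e^{iπna/δ} ∫_{a-δ}^{a+δ} f(u) e^{-iπnu/δ} du`;
no condition relating `f(a-δ)` and `f(a+δ)` is required. -/
theorem fourier_corollary_central (a δ : ℝ) (hδ : 0 < δ)
    (f f' : ℝ → ℂ)
    (hdiff : ∀ x ∈ Set.Icc (a - δ) (a + δ), HasDerivAt f (f' x) x)
    (hint : IntervalIntegrable f' volume (a - δ) (a + δ)) :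
    Filter.Tendsto (fun M : ℕ => ((1 / (2 * δ) : ℝ) : ℂ) *
        ∑ n ∈ Finset.Icc (-(M : ℤ)) (M : ℤ),
          Complex.exp (Complex.I * Real.pi * n * a / δ) *
            ∫ u in (a - δ)..(a + δ), f u * Complex.exp (-(Complex.I * Real.pi * n * u) / δ))
      Filter.atTop (nhds (f a)) := by
  have hab : a - δ ≤ a + δ := by linarith
  have hδ' : (δ:ℂ) ≠ 0 := by exact_mod_cast hδ.ne'
  set θ : ℝ → ℝ := fun u => π*(a-u)/δ with hθ
  set K : ℕ → ℝ → ℂ := fun M u => ∑ n ∈ Finset.Icc (-(M:ℤ)) (M:ℤ),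
      Complex.exp (Complex.I * n * ((θ u : ℝ) : ℂ)) with hK
  -- continuity and integrability of f
  have hfcOn : ContinuousOn f (Set.Icc (a-δ) (a+δ)) :=
    fun u hu => ((hdiff u hu).continuousAt).continuousWithinAt
  have hfii : IntervalIntegrable f volume (a-δ) (a+δ) :=
    ContinuousOn.intervalIntegrable (by rwa [Set.uIcc_of_le hab])
  have hθc : Continuous θ := by
    rw [hθ]; fun_prop
  have hKcont : ∀ M, Continuous (K M) := by
    intro M
    apply continuous_finset_sum
    intro n _
    exact Complex.continuous_exp.comp (continuous_const.mul (Complex.continuous_ofReal.comp hθc))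
  have hchar_cont : ∀ n : ℤ, Continuous (fun u : ℝ => Complex.exp (Complex.I * n * ((θ u : ℝ) : ℂ))) :=
    fun n => Complex.continuous_exp.comp (continuous_const.mul (Complex.continuous_ofReal.comp hθc))
  have hswap : ∀ M : ℕ, (∫ u in (a-δ)..(a+δ), f u * K M u) = ∑ n ∈ Finset.Icc (-(M:ℤ)) (M:ℤ),
      ∫ u in (a-δ)..(a+δ), f u * Complex.exp (Complex.I * n * ((θ u : ℝ) : ℂ)) := by
    intro M
    rw [← intervalIntegral.integral_finset_sum]
    · apply intervalIntegral.integral_congr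
      intro u _
      rw [hK]
      exact Finset.mul_sum _ _ _
    · intro n _
      exact hfii.mul_continuousOn (Continuous.continuousOn (hchar_cont n))
  have hterm : ∀ n : ℤ, Complex.exp (Complex.I * Real.pi * n * a / δ) *
      (∫ u in (a-δ)..(a+δ), f u * Complex.exp (-(Complex.I * Real.pi * n * u) / δ))
      = ∫ u in (a-δ)..(a+δ), f u * Complex.exp (Complex.I * n * ((θ u : ℝ) : ℂ)) := by
    intro n
    rw [← intervalIntegral.integral_const_mul]
    apply intervalIntegral.integral_congr
    intro u _
    dsimp only
    rw [mul_left_comm, ← Complex.exp_add]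
    congr 2
    simp only [hθ]
    push_cast
    field_simp
    ring
  have hsum : ∀ M : ℕ, (∑ n ∈ Finset.Icc (-(M:ℤ)) (M:ℤ),
      Complex.exp (Complex.I * Real.pi * n * a / δ) *
        ∫ u in (a-δ)..(a+δ), f u * Complex.exp (-(Complex.I * Real.pi * n * u) / δ))
      = ∫ u in (a-δ)..(a+δ), f u * K M u := by
    intro M
    rw [hswap M]
    exact Finset.sum_congr rfl fun n _ => hterm n
  have hK2 : ∀ M : ℕ, (∫ u in (a-δ)..(a+δ), K M u) = (2*δ:ℂ) := by
    intro M
    rw [hK]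
    rw [intervalIntegral.integral_finset_sum (fun n _ =>
      (Continuous.continuousOn (hchar_cont n)).intervalIntegrable)]
    have hki : ∀ n : ℤ, (∫ u in (a-δ)..(a+δ), Complex.exp (Complex.I * n * ((θ u : ℝ) : ℂ)))
        = if n = 0 then (2*δ:ℂ) else 0 := by
      intro n
      simp only [hθ]
      exact kernel_int a δ hδ n
    rw [Finset.sum_congr rfl fun n _ => hki n]
    rw [Finset.sum_ite_eq' (Finset.Icc (-(M:ℤ)) (M:ℤ)) (0:ℤ) (fun _ => (2*δ:ℂ))]
    rw [if_pos (by simp)]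
  set E : ℕ → ℂ := fun M => ∫ u in (a-δ)..(a+δ), (f u - f a) * K M u with hE
  have hKii : ∀ M, IntervalIntegrable (K M) volume (a-δ) (a+δ) :=
    fun M => ((hKcont M).continuousOn).intervalIntegrable
  have hfKii : ∀ M, IntervalIntegrable (fun u => f u * K M u) volume (a-δ) (a+δ) :=
    fun M => hfii.mul_continuousOn ((hKcont M).continuousOn)
  have hsubE : ∀ M, E M = (∫ u in (a-δ)..(a+δ), f u * K M u) - f a * (2*δ:ℂ) := by
    intro M
    rw [hE]
    simp only []
    rw [show (fun u => (f u - f a) * K M u) = fun u => f u * K M u - f a * K M u from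
      funext fun u => by ring]
    rw [intervalIntegral.integral_sub (hfKii M) ((hKii M).const_mul (f a))]
    rw [intervalIntegral.integral_const_mul, hK2 M]
  have hc1 : ((1/(2*δ):ℝ):ℂ) * (2*δ:ℂ) = 1 := by
    push_cast
    field_simp
  have hPE : ∀ M : ℕ, (((1 / (2 * δ) : ℝ) : ℂ) *
      ∑ n ∈ Finset.Icc (-(M : ℤ)) (M : ℤ),
        Complex.exp (Complex.I * Real.pi * n * a / δ) *
          ∫ u in (a - δ)..(a + δ), f u * Complex.exp (-(Complex.I * Real.pi * n * u) / δ))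
      = f a + ((1/(2*δ):ℝ):ℂ) * E M := by
    intro M
    rw [hsum M, hsubE M]
    linear_combination (f a) * hc1
  have hmes : MeasurableSet (Set.Ioc (a-δ) (a+δ)) := measurableSet_Ioc
  have hE0 : Tendsto E atTop (nhds 0) := by
    set g : ℝ → ℂ := fun u => (f u - f a) / ((Real.sin (π*(a-u)/(2*δ)) : ℝ) : ℂ) with hg
    set h₁ : ℝ → ℂ := (Set.Ioc (a-δ) (a+δ)).indicator
        (fun u => g u * ((Real.cos (π*(a-u)/(2*δ)) : ℝ) : ℂ)) with hh₁
    set h₂ : ℝ → ℂ := (Set.Ioc (a-δ) (a+δ)).indicator (fun u => f u - f a) with hh₂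
    -- Step A : rewrite E M as an integral over ℝ
    have hstepA : ∀ M : ℕ, E M = ∫ v : ℝ, (h₁ v * Complex.sin ((((M:ℝ) * θ v : ℝ)):ℂ)
        + h₂ v * Complex.cos ((((M:ℝ) * θ v : ℝ)):ℂ)) := by
      intro M
      rw [hE]
      dsimp only
      rw [intervalIntegral.integral_of_le hab]
      have hae : ∀ᵐ u ∂(volume : Measure ℝ), u ∈ Set.Ioc (a-δ) (a+δ) →
          (f u - f a) * K M u = g u * ((Real.cos (π*(a-u)/(2*δ)) : ℝ) : ℂ)
            * Complex.sin ((((M:ℝ) * θ u : ℝ)):ℂ)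
            + (f u - f a) * Complex.cos ((((M:ℝ) * θ u : ℝ)):ℂ) := by
        have hsing : (volume : Measure ℝ) {a} = 0 := measure_singleton a
        filter_upwards [compl_mem_ae_iff.mpr hsing] with u hu hmem
        have hune : u ≠ a := hu
        have h1 : |a - u| ≤ δ := by
          rw [abs_le]; cases' hmem with hm1 hm2; constructor <;> linarith
        have hargle : |π*(a-u)/(2*δ)| ≤ π/2 := by
          rw [abs_div, abs_mul, _root_.abs_of_pos Real.pi_pos,
            _root_.abs_of_pos (by linarith : (0:ℝ) < 2*δ)]
          rw [div_le_div_iff₀ (by linarith) (by norm_num)]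
          nlinarith [Real.pi_pos]
        have hargpos : 0 < |π*(a-u)/(2*δ)| := by
          rw [abs_pos]
          have : a - u ≠ 0 := sub_ne_zero.mpr (Ne.symm hune)
          positivity
        have hsne : Real.sin (π*(a-u)/(2*δ)) ≠ 0 := by
          have hj := jordan hargle
          have hpp : 0 < 2/π * |π*(a-u)/(2*δ)| := by
            have := Real.pi_pos; positivity
          intro hcontra
          rw [hcontra] at hj
          simp at hj
          nlinarith
        have hsC : ((Real.sin (π*(a-u)/(2*δ)) : ℝ) : ℂ) ≠ 0 := Complex.ofReal_ne_zero.mpr hsne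
        -- Dirichlet identity specialized
        have hd := dirichlet ((θ u : ℝ) : ℂ) M
        have harg1 : (((θ u : ℝ)):ℂ)/2 = (((π*(a-u)/(2*δ) : ℝ)):ℂ) := by
          simp only [hθ]
          push_cast
          ring
        have harg2 : (((M:ℂ) + 1/2)) * (((θ u : ℝ)):ℂ)
            = (((M:ℝ) * θ u : ℝ):ℂ) + (((π*(a-u)/(2*δ) : ℝ)):ℂ) := by
          simp only [hθ]
          push_cast
          ring
        rw [harg1, harg2, Complex.sin_add] at hd
        -- hd : K M u * sin(half) = sin(Mθ) * cos(half) + cos(Mθ) * sin(half)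
        rw [hg]
        dsimp only
        rw [Complex.ofReal_sin, Complex.ofReal_cos]
        have hs'ne : Complex.sin (((π*(a-u)/(2*δ) : ℝ)):ℂ) ≠ 0 := by
          rw [← Complex.ofReal_sin]
          exact hsC
        set KK := K M u with hKK
        set S := Complex.sin ((((M:ℝ) * θ u : ℝ)):ℂ) with hS
        set Co := Complex.cos ((((M:ℝ) * θ u : ℝ)):ℂ) with hCo
        set s' := Complex.sin (((π*(a-u)/(2*δ) : ℝ)):ℂ) with hs'
        set c' := Complex.cos (((π*(a-u)/(2*δ) : ℝ)):ℂ) with hc'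
        have e1 : (f u - f a) * KK = ((f u - f a) / s') * (KK * s') := by
          field_simp
        rw [e1, hd]
        field_simp
      rw [MeasureTheory.setIntegral_congr_ae hmes hae]
      rw [← MeasureTheory.integral_indicator hmes]
      congr 1
      funext v
      by_cases hv : v ∈ Set.Ioc (a-δ) (a+δ)
      · rw [Set.indicator_of_mem hv, hh₁, hh₂, Set.indicator_of_mem hv, Set.indicator_of_mem hv]
      · rw [Set.indicator_of_notMem hv, hh₁, hh₂, Set.indicator_of_notMem hv,
          Set.indicator_of_notMem hv]
        simp
    -- integrability of h₁ and h₂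
    have hsin_cont : Continuous (fun u : ℝ => ((Real.sin (π*(a-u)/(2*δ)) : ℝ) : ℂ)) :=
      Complex.continuous_ofReal.comp (Real.continuous_sin.comp (by fun_prop))
    have hcos_cont : Continuous (fun u : ℝ => ((Real.cos (π*(a-u)/(2*δ)) : ℝ) : ℂ)) :=
      Complex.continuous_ofReal.comp (Real.continuous_cos.comp (by fun_prop))
    have hg_meas : AEStronglyMeasurable g (volume.restrict (Set.Ioc (a-δ) (a+δ))) := by
      rw [hg]
      simp only [div_eq_mul_inv]
      apply AEStronglyMeasurable.mul
      · exact ((hfcOn.mono Set.Ioc_subset_Icc_self).sub continuousOn_const).aestronglyMeasurable hmes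
      · exact (hsin_cont.measurable.inv).aestronglyMeasurable
    obtain ⟨C, hC⟩ := gbound a δ hδ f f' hdiff
    have hIh₁ : Integrable h₁ := by
      rw [hh₁]
      rw [MeasureTheory.integrable_indicator_iff hmes]
      have hprod : AEStronglyMeasurable (fun u => g u * ((Real.cos (π*(a-u)/(2*δ)) : ℝ):ℂ))
          (volume.restrict (Set.Ioc (a-δ) (a+δ))) := hg_meas.mul hcos_cont.aestronglyMeasurable
      refine ⟨hprod, MeasureTheory.HasFiniteIntegral.restrict_of_bounded (C := |C|)
        measure_Ioc_lt_top ?_⟩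
      · rw [MeasureTheory.ae_restrict_iff' hmes]
        apply MeasureTheory.ae_of_all
        intro u hu
        have hb := hC u (Set.Ioc_subset_Icc_self hu)
        rw [norm_mul, Complex.norm_real, Real.norm_eq_abs]
        calc ‖g u‖ * |Real.cos (π*(a-u)/(2*δ))|
            ≤ ‖g u‖ * 1 := by
              apply mul_le_mul_of_nonneg_left (Real.abs_cos_le_one _) (norm_nonneg _)
          _ = ‖g u‖ := mul_one _
          _ ≤ C := hb
          _ ≤ |C| := le_abs_self C
    have hIh₂ : Integrable h₂ := by
      rw [hh₂]
      rw [MeasureTheory.integrable_indicator_iff hmes]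
      exact (((hfcOn.sub continuousOn_const).integrableOn_Icc).mono_set Set.Ioc_subset_Icc_self)
    -- frequency sequences
    set α : ℕ → ℝ := fun M => (M:ℝ)*π*a/δ with hα
    set β : ℕ → ℝ := fun M => (M:ℝ)*π/δ with hβ
    have hβtop : Tendsto β atTop atTop := by
      rw [hβ]
      simp only [mul_div_assoc]
      exact Filter.Tendsto.atTop_mul_const (div_pos Real.pi_pos hδ) tendsto_natCast_atTop_atTop
    have hβcc : Tendsto β atTop (cocompact ℝ) := by
      rw [cocompact_eq_atBot_atTop]
      exact hβtop.mono_right le_sup_right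
    have hβ'cc : Tendsto (fun M => -(β M)) atTop (cocompact ℝ) := by
      rw [cocompact_eq_atBot_atTop]
      exact (tendsto_neg_atTop_atBot.comp hβtop).mono_right le_sup_left
    have hT1' : Tendsto (fun M => ∫ v : ℝ, h₁ v * Complex.exp (-(β M * v) * Complex.I)) atTop (nhds 0) :=
      RL h₁ β hβcc
    have hT3' : Tendsto (fun M => ∫ v : ℝ, h₂ v * Complex.exp (-(β M * v) * Complex.I)) atTop (nhds 0) :=
      RL h₂ β hβcc
    have hT2' : Tendsto (fun M => ∫ v : ℝ, h₁ v * Complex.exp (-(-β M * v) * Complex.I)) atTop (nhds 0) := by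
      refine Filter.Tendsto.congr (fun M => ?_) (RL h₁ (fun M => -(β M)) hβ'cc)
      congr 1
      funext v
      rw [Complex.ofReal_neg]
    have hT4' : Tendsto (fun M => ∫ v : ℝ, h₂ v * Complex.exp (-(-β M * v) * Complex.I)) atTop (nhds 0) := by
      refine Filter.Tendsto.congr (fun M => ?_) (RL h₂ (fun M => -(β M)) hβ'cc)
      congr 1
      funext v
      rw [Complex.ofReal_neg]
    have hnorm : ∀ M : ℕ, ‖E M‖ ≤
        (1/2)*‖∫ v : ℝ, h₁ v * Complex.exp (-(-β M * v) * Complex.I)‖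
        + (1/2)*‖∫ v : ℝ, h₁ v * Complex.exp (-(β M * v) * Complex.I)‖
        + (1/2)*‖∫ v : ℝ, h₂ v * Complex.exp (-(β M * v) * Complex.I)‖
        + (1/2)*‖∫ v : ℝ, h₂ v * Complex.exp (-(-β M * v) * Complex.I)‖ := by
      intro M
      rw [hstepA M]
      have hreal : ∀ v : ℝ, ((M:ℝ) * θ v : ℝ) = α M - β M * v := by
        intro v
        simp only [hθ, hα, hβ]
        ring
      rw [show (fun v : ℝ => h₁ v * Complex.sin ((((M:ℝ) * θ v : ℝ)):ℂ)
          + h₂ v * Complex.cos ((((M:ℝ) * θ v : ℝ)):ℂ))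
          = fun v : ℝ => h₁ v * Complex.sin (((α M - β M * v : ℝ)):ℂ)
            + h₂ v * Complex.cos (((α M - β M * v : ℝ)):ℂ) from
          funext fun v => by rw [hreal v]]
      exact core_bound h₁ h₂ hIh₁ hIh₂ (α M) (β M)
    have hbound0 : Tendsto (fun M =>
        (1/2)*‖∫ v : ℝ, h₁ v * Complex.exp (-(-β M * v) * Complex.I)‖
        + (1/2)*‖∫ v : ℝ, h₁ v * Complex.exp (-(β M * v) * Complex.I)‖
        + (1/2)*‖∫ v : ℝ, h₂ v * Complex.exp (-(β M * v) * Complex.I)‖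
        + (1/2)*‖∫ v : ℝ, h₂ v * Complex.exp (-(-β M * v) * Complex.I)‖) atTop (nhds 0) := by
      have h := (((hT2'.norm.const_mul (1/2:ℝ)).add (hT1'.norm.const_mul (1/2:ℝ))).add
        (hT3'.norm.const_mul (1/2:ℝ))).add (hT4'.norm.const_mul (1/2:ℝ))
      simpa using h
    have hEn : Tendsto (fun M => ‖E M‖) atTop (nhds 0) :=
      squeeze_zero (fun M => norm_nonneg _) hnorm hbound0
    exact tendsto_zero_iff_norm_tendsto_zero.mpr hEn
  refine Tendsto.congr (fun M => (hPE M).symm) ?_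
  simpa using (tendsto_const_nhds : Tendsto (fun _ : ℕ => f a) atTop (nhds (f a))).add
    (hE0.const_mul ((1/(2*δ):ℝ):ℂ))
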